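/- Let ν : ℝ → (0,∞) be a bounded weight with inf ν > 0 and m(r) = ∫_{−r}^{r} ν(s) ds → ∞. If φ : ℝ → ℝⁿ is bounded continuous with (1/m(r)) ∫_{−r}^{r} ‖φ(s)‖ ν(s) ds → 0 as r → ∞, then for every fixed s ∈ ℝ the translate t ↦ φ(t+s) satisfies (1/m(r)) ∫_{−r}^{r} ‖φ(t+s)‖ ν(t) dt → 0 as r → ∞. -/

import Mathlib

open Filter MeasureTheory

theorem stmt_7 {n : ℕ} (ν : ℝ → ℝ) (φ : ℝ → (Fin n → ℝ))
    (hνpos : ∀ s, 0 < ν s)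
    (hνloc : LocallyIntegrable ν volume)
    (hνbdd : ∃ b : ℝ, ∀ s, ν s ≤ b)
    (hνinf : ∃ a : ℝ, 0 < a ∧ ∀ s, a ≤ ν s)
    (hm : Tendsto (fun r : ℝ => ∫ s in (-r)..r, ν s) atTop atTop)
    (hφc : Continuous φ) (hφb : ∃ C : ℝ, ∀ t, ‖φ t‖ ≤ C)
    (herg : Tendsto (fun r : ℝ =>
        (∫ s in (-r)..r, ‖φ s‖ * ν s) / (∫ s in (-r)..r, ν s)) atTop (nhds 0))
    (s : ℝ) :
    Tendsto (fun r : ℝ =>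
        (∫ t in (-r)..r, ‖φ (t + s)‖ * ν t) / (∫ t in (-r)..r, ν t))
      atTop (nhds 0) := by
  obtain ⟨b, hb⟩ := hνbdd
  obtain ⟨a, ha0, ha⟩ := hνinf
  obtain ⟨C, hC⟩ := hφb
  have hab : a ≤ b := (ha 0).trans (hb 0)
  have hb0 : 0 < b := ha0.trans_le hab
  -- integrability facts
  have hνint : ∀ u v : ℝ, IntervalIntegrable ν volume u v := fun u v =>
    (hνloc.integrableOn_isCompact isCompact_uIcc).intervalIntegrable
  have hmulint : ∀ (ψ : ℝ → ℝ), Continuous ψ → (∀ t, ‖ψ t‖ ≤ C) →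
      ∀ u v : ℝ, IntervalIntegrable (fun t => ψ t * ν t) volume u v := by
    intro ψ hψc hψC u v
    exact ⟨(hνint u v).1.bdd_mul hψc.aestronglyMeasurable.restrict (ae_of_all _ hψC),
      (hνint u v).2.bdd_mul hψc.aestronglyMeasurable.restrict (ae_of_all _ hψC)⟩
  have hC0 : ∀ t, ‖‖φ t‖‖ ≤ C := fun t => by
    rw [Real.norm_of_nonneg (norm_nonneg _)]; exact hC t
  have hInt1 : ∀ u v : ℝ, IntervalIntegrable (fun t => ‖φ t‖ * ν t) volume u v :=
    hmulint _ hφc.norm hC0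
  have hInt2 : ∀ u v : ℝ, IntervalIntegrable (fun t => ‖φ (t + s)‖ * ν t) volume u v :=
    hmulint _ ((hφc.comp (continuous_id.add continuous_const)).norm) (fun t => hC0 _)
  have hInt3 : ∀ u v : ℝ, IntervalIntegrable (fun t => ‖φ (t + s)‖ * ν (t + s)) volume u v := by
    intro u v
    simpa using (hInt1 (u + s) (v + s)).comp_add_right s
  -- notation
  set N : ℝ → ℝ := fun r => ∫ t in (-r)..r, ‖φ (t + s)‖ * ν t with hN
  set M : ℝ → ℝ := fun r => ∫ t in (-r)..r, ν t with hM
  set A : ℝ → ℝ := fun r => ∫ t in (-r)..r, ‖φ t‖ * ν t with hA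
  set G : ℝ → ℝ := fun r => A r / M r with hG
  -- M r ≥ 2 a r for r ≥ 0
  have hMlow : ∀ r : ℝ, 0 ≤ r → 2 * a * r ≤ M r := by
    intro r hr
    have h1 : ∫ t in (-r)..r, a ≤ M r := by
      apply intervalIntegral.integral_mono_on (by linarith) (by simp) (hνint _ _)
      intro x _; exact ha x
    have h2 : (∫ _ in (-r)..r, a : ℝ) = 2 * a * r := by
      rw [intervalIntegral.integral_const, smul_eq_mul]; ring
    linarith
  have hMup : ∀ r : ℝ, 0 ≤ r → M r ≤ 2 * b * r := by
    intro r hr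
    have h1 : M r ≤ ∫ t in (-r)..r, b := by
      apply intervalIntegral.integral_mono_on (by linarith) (hνint _ _) (by simp)
      intro x _; exact hb x
    have h2 : (∫ _ in (-r)..r, b : ℝ) = 2 * b * r := by
      rw [intervalIntegral.integral_const, smul_eq_mul]; ring
    linarith
  have hMpos : ∀ r : ℝ, 0 < r → 0 < M r := fun r hr =>
    lt_of_lt_of_le (by positivity) (hMlow r hr.le)
  -- numerator nonneg
  have hNnn : ∀ r : ℝ, 0 ≤ r → 0 ≤ N r := by
    intro r hr
    apply intervalIntegral.integral_nonneg (by linarith)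
    intro u _; exact mul_nonneg (norm_nonneg _) (hνpos u).le
  have hAnn : ∀ r : ℝ, 0 ≤ r → 0 ≤ A r := by
    intro r hr
    apply intervalIntegral.integral_nonneg (by linarith)
    intro u _; exact mul_nonneg (norm_nonneg _) (hνpos u).le
  -- key bound: N r ≤ (b/a) * A (r + |s|) for r ≥ 0
  have hkey : ∀ r : ℝ, 0 ≤ r → N r ≤ (b / a) * A (r + |s|) := by
    intro r hr
    have step1 : N r ≤ (b / a) * ∫ t in (-r)..r, ‖φ (t + s)‖ * ν (t + s) := by
      rw [← intervalIntegral.integral_const_mul]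
      apply intervalIntegral.integral_mono_on (by linarith) (hInt2 _ _)
        ((hInt3 _ _).const_mul _)
      intro x _
      have h1 : ν x ≤ (b / a) * ν (x + s) := by
        rw [div_mul_eq_mul_div, le_div_iff₀ ha0]
        nlinarith [hb x, ha (x + s), (hνpos x).le]
      calc ‖φ (x + s)‖ * ν x ≤ ‖φ (x + s)‖ * ((b / a) * ν (x + s)) :=
            mul_le_mul_of_nonneg_left h1 (norm_nonneg _)
        _ = b / a * (‖φ (x + s)‖ * ν (x + s)) := by ring
    have step2 : (∫ t in (-r)..r, ‖φ (t + s)‖ * ν (t + s))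
        = ∫ u in (-r + s)..(r + s), ‖φ u‖ * ν u :=
      intervalIntegral.integral_comp_add_right (fun u => ‖φ u‖ * ν u) s
    have step3 : (∫ u in (-r + s)..(r + s), ‖φ u‖ * ν u) ≤ A (r + |s|) := by
      apply intervalIntegral.integral_mono_interval (c := -(r + |s|)) (d := r + |s|)
        (by cases abs_cases s with
            | inl h => rw [h.1]; linarith
            | inr h => linarith [h.1, abs_nonneg s]) (by linarith)
        (by cases abs_cases s with
            | inl h => linarith [h.1]
            | inr h => rw [← h.1] at *; linarith [abs_nonneg s, neg_abs_le s])
        (Filter.Eventually.of_forall fun u => mul_nonneg (norm_nonneg _) (hνpos u).le)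
        (hInt1 _ _)
    calc N r ≤ (b / a) * ∫ t in (-r)..r, ‖φ (t + s)‖ * ν (t + s) := step1
      _ = (b / a) * ∫ u in (-r + s)..(r + s), ‖φ u‖ * ν u := by rw [step2]
      _ ≤ (b / a) * A (r + |s|) := by
          apply mul_le_mul_of_nonneg_left step3 (by positivity)
  -- squeeze
  set K : ℝ := (b / a) * ((b / a) * (1 + |s|)) with hK
  have hupper : ∀ r : ℝ, 1 ≤ r → N r / M r ≤ K * G (r + |s|) := by
    intro r hr
    have hr0 : (0:ℝ) ≤ r := by linarith
    have hR0 : (0:ℝ) < r + |s| := by linarith [abs_nonneg s]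
    have hMr : 0 < M r := hMpos r (by linarith)
    have hMR : 0 < M (r + |s|) := hMpos _ hR0
    have hAeq : A (r + |s|) = G (r + |s|) * M (r + |s|) := by
      rw [hG]; field_simp
    have hratio : M (r + |s|) / M r ≤ (b / a) * (1 + |s|) := by
      have h1 : M (r + |s|) ≤ 2 * b * (r + |s|) := hMup _ hR0.le
      have h2 : 2 * a * r ≤ M r := hMlow r hr0
      rw [div_le_iff₀ hMr]
      have h3 : (b / a) * (1 + |s|) * (2 * a * r) ≤ (b / a) * (1 + |s|) * M r := by
        apply mul_le_mul_of_nonneg_left h2 (by positivity)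
      have h4 : 2 * b * (r + |s|) ≤ (b / a) * (1 + |s|) * (2 * a * r) := by
        have : (b / a) * (1 + |s|) * (2 * a * r) = 2 * b * ((1 + |s|) * r) := by
          field_simp
        rw [this]
        have : r + |s| ≤ (1 + |s|) * r := by nlinarith [abs_nonneg s]
        nlinarith
      linarith
    have hGnn : 0 ≤ G (r + |s|) := div_nonneg (hAnn _ hR0.le) hMR.le
    have := hkey r hr0
    calc N r / M r ≤ ((b / a) * A (r + |s|)) / M r := (div_le_div_iff_of_pos_right hMr).mpr (hkey r hr0)
      _ = (b / a) * G (r + |s|) * (M (r + |s|) / M r) := by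
          rw [hAeq]; field_simp
      _ ≤ (b / a) * G (r + |s|) * ((b / a) * (1 + |s|)) := by
          apply mul_le_mul_of_nonneg_left hratio (by positivity)
      _ = K * G (r + |s|) := by rw [hK]; ring
  have hlower : ∀ r : ℝ, 1 ≤ r → 0 ≤ N r / M r := fun r hr =>
    div_nonneg (hNnn r (by linarith)) (hMpos r (by linarith)).le
  have hGlim : Tendsto (fun r : ℝ => K * G (r + |s|)) atTop (nhds 0) := by
    have h1 : Tendsto (fun r : ℝ => r + |s|) atTop atTop :=
      tendsto_atTop_add_const_right _ _ tendsto_id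
    have h2 : Tendsto (fun r : ℝ => G (r + |s|)) atTop (nhds 0) := herg.comp h1
    simpa using h2.const_mul K
  apply tendsto_of_tendsto_of_tendsto_of_le_of_le' tendsto_const_nhds hGlim
  · filter_upwards [eventually_ge_atTop (1:ℝ)] with r hr using hlower r hr
  · filter_upwards [eventually_ge_atTop (1:ℝ)] with r hr using hupper r hr
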